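/- Let f, g : ℝ → ℝ be twice differentiable, convex, non-negative functions, and define F : ℝ² → ℝ by F(x,y) := f(x)g(y). If (f'(x))²(g'(y))² ≤ f''(x) f(x) g''(y) g(y) for all (x,y) ∈ ℝ², then F is convex on ℝ². -/

import Mathlib

/-- If `u` is monotone and has derivative `u' x` at `x`, then `0 ≤ u' x`. -/
lemma aux_deriv_nonneg_of_monotone {u : ℝ → ℝ} {d x : ℝ} (hu : Monotone u)
    (h : HasDerivAt u d x) : 0 ≤ d := by
  have hs : Filter.Tendsto (slope u x) (nhdsWithin x (Set.Ioi x)) (nhds d) :=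
    (hasDerivAt_iff_tendsto_slope.mp h).mono_left
      (nhdsWithin_mono x fun y hy => ne_of_gt hy)
  refine ge_of_tendsto hs ?_
  filter_upwards [self_mem_nhdsWithin] with y hy
  have hxy : x < y := hy
  have : 0 ≤ u y - u x := sub_nonneg.mpr (hu hxy.le)
  have hpos : 0 < y - x := sub_pos.mpr hxy
  rw [slope_def_field]
  exact div_nonneg this hpos.le

/-- **Hájek–Procházka, Lemma 2.6.** If `f, g` are twice differentiable, convex,
non-negative real functions and `(f'(x))²(g'(y))² ≤ f''(x) f(x) g''(y) g(y)` for all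
`(x, y)`, then `F(x, y) = f(x) g(y)` is convex on `ℝ²`. -/
theorem convexOn_mul_of_discriminant {f g f' f'' g' g'' : ℝ → ℝ}
    (hf1 : ∀ x, HasDerivAt f (f' x) x) (hf2 : ∀ x, HasDerivAt f' (f'' x) x)
    (hg1 : ∀ x, HasDerivAt g (g' x) x) (hg2 : ∀ x, HasDerivAt g' (g'' x) x)
    (hfconv : ConvexOn ℝ Set.univ f) (hgconv : ConvexOn ℝ Set.univ g)
    (hfnn : ∀ x, 0 ≤ f x) (hgnn : ∀ x, 0 ≤ g x)
    (h : ∀ x y : ℝ, (f' x) ^ 2 * (g' y) ^ 2 ≤ f'' x * f x * (g'' y * g y)) :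
    ConvexOn ℝ Set.univ (fun p : ℝ × ℝ => f p.1 * g p.2) := by
  -- f' and g' are monotone
  have hf'mono : Monotone f' := by
    have hd : deriv f = f' := funext fun x => (hf1 x).deriv
    have := hfconv.monotoneOn_deriv (fun x _ => (hf1 x).differentiableAt)
    rw [hd] at this
    exact fun a b hab => this (Set.mem_univ a) (Set.mem_univ b) hab
  have hg'mono : Monotone g' := by
    have hd : deriv g = g' := funext fun x => (hg1 x).deriv
    have := hgconv.monotoneOn_deriv (fun x _ => (hg1 x).differentiableAt)
    rw [hd] at this
    exact fun a b hab => this (Set.mem_univ a) (Set.mem_univ b) hab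
  have hf'' : ∀ x, 0 ≤ f'' x := fun x => aux_deriv_nonneg_of_monotone hf'mono (hf2 x)
  have hg'' : ∀ x, 0 ≤ g'' x := fun x => aux_deriv_nonneg_of_monotone hg'mono (hg2 x)
  refine ⟨convex_univ, fun p _ q _ a b ha hb hab => ?_⟩
  set dx := q.1 - p.1 with hdx
  set dy := q.2 - p.2 with hdy
  set X : ℝ → ℝ := fun t => p.1 + t * dx with hX
  set Y : ℝ → ℝ := fun t => p.2 + t * dy with hY
  have hXd : ∀ t, HasDerivAt X dx t := fun t => by
    have := ((hasDerivAt_id t).mul_const dx).const_add p.1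
    simp only [one_mul] at this
    exact this
  have hYd : ∀ t, HasDerivAt Y dy t := fun t => by
    have := ((hasDerivAt_id t).mul_const dy).const_add p.2
    simp only [one_mul] at this
    exact this
  set φ : ℝ → ℝ := fun t => f (X t) * g (Y t) with hφdef
  set φ' : ℝ → ℝ := fun t => f' (X t) * dx * g (Y t) + f (X t) * (g' (Y t) * dy) with hφ'def
  have hφ1 : ∀ t, HasDerivAt φ (φ' t) t := fun t =>
    (((hf1 (X t)).comp t (hXd t)).mul ((hg1 (Y t)).comp t (hYd t)))
  have hφ2 : ∀ t, HasDerivAt φ'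
      (f'' (X t) * dx * dx * g (Y t) + 2 * (f' (X t) * dx) * (g' (Y t) * dy)
        + f (X t) * (g'' (Y t) * dy * dy)) t := by
    intro t
    have h1 : HasDerivAt (fun t => f' (X t) * dx * g (Y t))
        ((f'' (X t) * dx) * dx * g (Y t) + f' (X t) * dx * (g' (Y t) * dy)) t :=
      ((((hf2 (X t)).comp t (hXd t)).mul_const dx).mul ((hg1 (Y t)).comp t (hYd t)))
    have h2 : HasDerivAt (fun t => f (X t) * (g' (Y t) * dy))
        ((f' (X t) * dx) * (g' (Y t) * dy) + f (X t) * ((g'' (Y t) * dy) * dy)) t :=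
      (((hf1 (X t)).comp t (hXd t)).mul (((hg2 (Y t)).comp t (hYd t)).mul_const dy))
    have := h1.add h2
    convert this using 1
    all_goals first | rfl | ring
  have hφ''nn : ∀ t, 0 ≤ f'' (X t) * dx * dx * g (Y t) + 2 * (f' (X t) * dx) * (g' (Y t) * dy)
      + f (X t) * (g'' (Y t) * dy * dy) := by
    intro t
    set x := X t
    set y := Y t
    have hA : 0 ≤ f'' x * dx * dx * g y := by
      nlinarith [mul_nonneg (mul_nonneg (hf'' x) (mul_self_nonneg dx)) (hgnn y)]
    have hC : 0 ≤ f x * (g'' y * dy * dy) := by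
      nlinarith [mul_nonneg (mul_nonneg (hg'' y) (mul_self_nonneg dy)) (hfnn x)]
    have hACD : (f' x * dx * (g' y * dy)) ^ 2
        ≤ (f'' x * dx * dx * g y) * (f x * (g'' y * dy * dy)) := by
      nlinarith [mul_le_mul_of_nonneg_left (h x y) (sq_nonneg (dx * dy))]
    nlinarith [hA, hC, hACD, sq_nonneg (f'' x * dx * dx * g y - f x * (g'' y * dy * dy)),
      sq_nonneg (f'' x * dx * dx * g y + f x * (g'' y * dy * dy) + 2 * (f' x * dx) * (g' y * dy))]
  have hφ'mono : Monotone φ' :=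
    monotone_of_hasDerivAt_nonneg hφ2 hφ''nn
  have hφconv : ConvexOn ℝ Set.univ φ := by
    have hd : deriv φ = φ' := funext fun t => (hφ1 t).deriv
    refine MonotoneOn.convexOn_of_deriv convex_univ
      (fun t _ => ((hφ1 t).continuousAt.continuousWithinAt))
      (fun t _ => ((hφ1 t).differentiableAt.differentiableWithinAt)) ?_
    rw [hd]
    exact fun s _ t _ hst => hφ'mono hst
  have key := hφconv.2 (Set.mem_univ (0:ℝ)) (Set.mem_univ (1:ℝ)) ha hb hab
  simp only [smul_eq_mul] at key
  have e0 : φ (a * 0 + b * 1) = f (a * p.1 + b * q.1) * g (a * p.2 + b * q.2) := by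
    simp only [hφdef, hX, hY]
    have h1 : p.1 + (a * 0 + b * 1) * dx = a * p.1 + b * q.1 := by
      rw [hdx]; linear_combination (-p.1) * hab
    have h2 : p.2 + (a * 0 + b * 1) * dy = a * p.2 + b * q.2 := by
      rw [hdy]; linear_combination (-p.2) * hab
    rw [h1, h2]
  have e1 : φ 0 = f p.1 * g p.2 := by simp [hφdef, hX, hY]
  have e2 : φ 1 = f q.1 * g q.2 := by simp [hφdef, hX, hY, hdx, hdy]
  rw [e0, e1, e2] at key
  simpa [Prod.smul_fst, Prod.smul_snd, Prod.fst_add, Prod.snd_add, smul_eq_mul] using key
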